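/- Let θ ∈ {0,1/2} and let ε ∈ ℂ with 1+εk ≠ 0 for every integer k. Suppose G: ℤ×(ℤ+θ) → ℂ, H: (ℤ+θ)×ℤ → ℂ, D: (ℤ+θ)×(ℤ+θ) → ℂ satisfy, for all m,n ∈ ℤ and r,s,t ∈ ℤ+θ: G(m,r)(1+2εr) − H(r,m)(1+εm) = (m/2−r)(1+2ε(m+r)); D(r,s)(1+2εs) + D(s,r)(1+2εr) = 2+2ε(r+s); (m−n)G(m+n,r) = G(n,r)G(m,n+r) − G(m,r)G(n,m+r); (m/2−r)H(m+r,n) = H(r,n)G(m,n+r) + n·H(r,m+n); (m/2−r)D(m+r,s) = −(r+s)D(r,s) − G(m,s)D(r,m+s); −2m = H(s,m)D(r,m+s) + H(r,m)D(s,m+r); 2G(r+s,t) = D(s,t)H(r,s+t) + D(r,t)H(s,r+t). Then for all r,s ∈ ℤ+θ and all k ∈ ℤ: D(2ks+r, s) = D(r,s) and D(−s, −2ks−r) = D(−s,−r); in particular D((2k+1)r, r) = 1 and D(r, (2k+1)r) = 1 for all r ∈ ℤ+θ and k ∈ ℤ. -/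

import Mathlib

/-- membership in ℤ + θ -/
def InZT (θ x : ℂ) : Prop := ∃ k : ℤ, x = (k : ℂ) + θ

/-- under the normalized equations (3.6)–(3.12), equation (3.18) holds: D(2ks+r,s) = D(r,s) and D(−s,−2ks−r) = D(−s,−r) for all k ∈ ℤ; in particular D((2k+1)r,r) = D(r,(2k+1)r) = 1. -/
theorem D_periodicity (θ ε : ℂ) (hθ : θ = 0 ∨ θ = 1 / 2)
    (hε : ∀ k : ℤ, 1 + ε * (k : ℂ) ≠ 0)
    (G H D : ℂ → ℂ → ℂ)
    (e1 : ∀ (m : ℤ) (r : ℂ), InZT θ r →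
      G m r * (1 + 2 * ε * r) - H r m * (1 + ε * (m : ℂ))
        = ((m : ℂ) / 2 - r) * (1 + 2 * ε * ((m : ℂ) + r)))
    (e2 : ∀ r s : ℂ, InZT θ r → InZT θ s →
      D r s * (1 + 2 * ε * s) + D s r * (1 + 2 * ε * r) = 2 + 2 * ε * (r + s))
    (e3 : ∀ (m n : ℤ) (r : ℂ), InZT θ r →
      ((m : ℂ) - (n : ℂ)) * G ((m : ℂ) + (n : ℂ)) r
        = G n r * G m ((n : ℂ) + r) - G m r * G n ((m : ℂ) + r))
    (e4 : ∀ (m n : ℤ) (r : ℂ), InZT θ r →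
      ((m : ℂ) / 2 - r) * H ((m : ℂ) + r) n
        = H r n * G m ((n : ℂ) + r) + (n : ℂ) * H r ((m : ℂ) + (n : ℂ)))
    (e5 : ∀ (m : ℤ) (r s : ℂ), InZT θ r → InZT θ s →
      ((m : ℂ) / 2 - r) * D ((m : ℂ) + r) s
        = -(r + s) * D r s - G m s * D r ((m : ℂ) + s))
    (e6 : ∀ (m : ℤ) (r s : ℂ), InZT θ r → InZT θ s →
      -2 * (m : ℂ) = H s m * D r ((m : ℂ) + s) + H r m * D s ((m : ℂ) + r))
    (e7 : ∀ r s t : ℂ, InZT θ r → InZT θ s → InZT θ t →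
      2 * G (r + s) t = D s t * H r (s + t) + D r t * H s (r + t)) :
    (∀ r s : ℂ, InZT θ r → InZT θ s → ∀ k : ℤ,
      D (2 * (k : ℂ) * s + r) s = D r s ∧
      D (-s) (-2 * (k : ℂ) * s - r) = D (-s) (-r)) ∧
    ∀ r : ℂ, InZT θ r → ∀ k : ℤ,
      D ((2 * (k : ℂ) + 1) * r) r = 1 ∧ D r ((2 * (k : ℂ) + 1) * r) = 1 := by
  -- basic closure helpers
  have hint2 : ∀ s : ℂ, InZT θ s → ∃ n : ℤ, (n : ℂ) = 2 * s := by
    rintro s ⟨k, rfl⟩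
    rcases hθ with h | h <;> subst h
    · exact ⟨2 * k, by push_cast; ring⟩
    · exact ⟨2 * k + 1, by push_cast; ring⟩
  have hintsum : ∀ s t : ℂ, InZT θ s → InZT θ t → ∃ n : ℤ, (n : ℂ) = s + t := by
    rintro s t ⟨a, rfl⟩ ⟨b, rfl⟩
    rcases hθ with h | h <;> subst h
    · exact ⟨a + b, by push_cast; ring⟩
    · exact ⟨a + b + 1, by push_cast; ring⟩
  have hintdiff : ∀ s t : ℂ, InZT θ s → InZT θ t → ∃ n : ℤ, (n : ℂ) = s - t := by
    rintro s t ⟨a, rfl⟩ ⟨b, rfl⟩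
    exact ⟨a - b, by push_cast; ring⟩
  have hmemneg : ∀ s : ℂ, InZT θ s → InZT θ (-s) := by
    rintro s ⟨k, rfl⟩
    rcases hθ with h | h <;> subst h
    · exact ⟨-k, by push_cast; ring⟩
    · exact ⟨-k - 1, by push_cast; ring⟩
  have hmemadd : ∀ x s : ℂ, (∃ n : ℤ, (n : ℂ) = x) → InZT θ s → InZT θ (x + s) := by
    rintro x s ⟨n, rfl⟩ ⟨k, rfl⟩
    exact ⟨n + k, by push_cast; ring⟩
  have hne2 : ∀ s : ℂ, InZT θ s → (1 : ℂ) + 2 * ε * s ≠ 0 := by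
    intro s hs
    obtain ⟨n, hn⟩ := hint2 s hs
    intro h
    exact hε n (by linear_combination h + ε * hn)
  -- D s s = 1
  have hDss : ∀ s : ℂ, InZT θ s → D s s = 1 := by
    intro s hs
    have h := e2 s s hs hs
    have h2 : (D s s - 1) * (2 * (1 + 2 * ε * s)) = 0 := by linear_combination h
    rcases mul_eq_zero.1 h2 with h3 | h3
    · exact sub_eq_zero.1 h3
    · exact absurd h3 (mul_ne_zero two_ne_zero (hne2 s hs))
  -- H s x * D s (x+s) = -x for integer x
  have hHD : ∀ s x y : ℂ, InZT θ s → (∃ n : ℤ, (n : ℂ) = x) → x + s = y →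
      H s x * D s y = -x := by
    rintro s x y hs ⟨n, rfl⟩ rfl
    have h := e6 n s s hs hs
    linear_combination (-1 / 2 : ℂ) * h
  -- D never vanishes
  have hDne : ∀ s t : ℂ, InZT θ s → InZT θ t → D s t ≠ 0 := by
    intro s t hs ht
    obtain ⟨n, hn⟩ := hintdiff t s ht hs
    by_cases h0 : (n : ℂ) = 0
    · have hts : t = s := by linear_combination h0 - hn
      rw [hts, hDss s hs]; exact one_ne_zero
    · have h := hHD s (n : ℂ) t hs ⟨n, rfl⟩ (by linear_combination hn)
      intro hD
      rw [hD, mul_zero] at h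
      exact h0 (by linear_combination h)
  have hH0 : ∀ s : ℂ, InZT θ s → H s 0 = 0 := by
    intro s hs
    have h := hHD s 0 s hs ⟨0, by norm_num⟩ (by ring)
    rw [hDss s hs, mul_one] at h
    simpa using h
  have hG0 : ∀ s : ℂ, InZT θ s → G 0 s = -s := by
    intro s hs
    have h := e5 0 s s hs hs
    push_cast at h
    rw [zero_add, hDss s hs] at h
    linear_combination h
  -- (Q*)
  have hQ : ∀ x t : ℂ, (∃ n : ℤ, (n : ℂ) = x) → InZT θ t →
      2 * G x t * D (-t) (x + t) = -(x + 2 * t) * D (x + t) t := by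
    rintro x t ⟨n, rfl⟩ ht
    have hmt := hmemneg t ht
    have hnt : InZT θ ((n : ℂ) + t) := hmemadd _ _ ⟨n, rfl⟩ ht
    have h := e7 (-t) ((n : ℂ) + t) t hmt hnt ht
    rw [show -t + ((n : ℂ) + t) = (n : ℂ) by ring,
      show ((n : ℂ) + t) + t = (n : ℂ) + 2 * t by ring,
      show -t + t = (0 : ℂ) by ring, hH0 _ hnt, mul_zero, add_zero] at h
    obtain ⟨m2, hm2⟩ := hint2 t ht
    have hHD1 := hHD (-t) ((n : ℂ) + 2 * t) ((n : ℂ) + t) hmt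
      ⟨n + m2, by push_cast; linear_combination hm2⟩ (by ring)
    linear_combination (D (-t) ((n : ℂ) + t)) * h + (D ((n : ℂ) + t) t) * hHD1
  -- D t (-t) = 1 and D (-t) t = 1
  have hDneg : ∀ t : ℂ, InZT θ t → D t (-t) = 1 ∧ D (-t) t = 1 := by
    intro t ht
    have hmt := hmemneg t ht
    have h1 : D t (-t) = 1 := by
      by_cases ht0 : t = 0
      · rw [ht0, neg_zero]; exact hDss 0 (ht0 ▸ ht)
      · obtain ⟨m2, hm2⟩ := hint2 t ht
        have hm2n : ((-m2 : ℤ) : ℂ) = -(2 * t) := by push_cast; linear_combination -hm2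
        have hG2 := hQ ((-m2 : ℤ) : ℂ) t ⟨-m2, rfl⟩ ht
        rw [show ((-m2 : ℤ) : ℂ) + t = -t by linear_combination hm2n,
          show ((-m2 : ℤ) : ℂ) + 2 * t = 0 by linear_combination hm2n,
          hDss (-t) hmt, mul_one, neg_zero, zero_mul] at hG2
        have hGz : G ((-m2 : ℤ) : ℂ) t = 0 := by linear_combination hG2 / 2
        have he := e1 (-m2) t ht
        have hfac : (H t ((-m2 : ℤ) : ℂ) - 2 * t) * (1 + ε * ((-m2 : ℤ) : ℂ)) = 0 := by
          linear_combination (-1 : ℂ) * he + (1 + 2 * ε * t) * hGz +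
            (-(ε * ((-m2 : ℤ) : ℂ)) + ε * t - 1 / 2) * hm2n
        have hHt : H t ((-m2 : ℤ) : ℂ) = 2 * t := by
          rcases mul_eq_zero.1 hfac with h | h
          · linear_combination h
          · exact absurd h (hε (-m2))
        have hHD2 := hHD t ((-m2 : ℤ) : ℂ) (-t) ht ⟨-m2, rfl⟩ (by linear_combination hm2n)
        rw [hHt] at hHD2
        have hc : 2 * t * (D t (-t) - 1) = 0 := by linear_combination hHD2 - hm2n
        rcases mul_eq_zero.1 hc with h | h
        · exact absurd h (mul_ne_zero two_ne_zero ht0)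
        · exact sub_eq_zero.1 h
    refine ⟨h1, ?_⟩
    have h := e2 t (-t) ht hmt
    rw [h1] at h
    have h2 : (D (-t) t - 1) * (1 + 2 * ε * t) = 0 := by linear_combination h
    rcases mul_eq_zero.1 h2 with h3 | h3
    · exact sub_eq_zero.1 h3
    · exact absurd h3 (hne2 t ht)
  -- (E4a)
  have hL8 : ∀ (m : ℤ) (t : ℂ), InZT θ t → (m : ℂ) ≠ 0 →
      G (m : ℂ) t * D (2 * (m : ℂ) + t) ((m : ℂ) + t)
        = -((m : ℂ) / 2 + t) * D ((m : ℂ) + t) t := by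
    intro m t ht hm
    have hmemmt : InZT θ ((m : ℂ) + t) := hmemadd _ _ ⟨m, rfl⟩ ht
    have hmem2mt : InZT θ (2 * (m : ℂ) + t) := hmemadd _ _ ⟨2 * m, by push_cast; ring⟩ ht
    have he := e4 m (-m) ((m : ℂ) + t) hmemmt
    push_cast at he
    rw [show (m : ℂ) + ((m : ℂ) + t) = 2 * (m : ℂ) + t by ring,
      show -(m : ℂ) + ((m : ℂ) + t) = t by ring,
      show (m : ℂ) + -(m : ℂ) = (0 : ℂ) by ring,
      hH0 _ hmemmt, mul_zero, add_zero] at he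
    have hB1 := hHD (2 * (m : ℂ) + t) (-(m : ℂ)) ((m : ℂ) + t) hmem2mt
      ⟨-m, by push_cast; ring⟩ (by ring)
    have hB2 := hHD ((m : ℂ) + t) (-(m : ℂ)) t hmemmt ⟨-m, by push_cast; ring⟩ (by ring)
    have hmul : (m : ℂ) * (G (m : ℂ) t * D (2 * (m : ℂ) + t) ((m : ℂ) + t))
        = (m : ℂ) * (-((m : ℂ) / 2 + t) * D ((m : ℂ) + t) t) := by
      linear_combination (-(D (2 * (m : ℂ) + t) ((m : ℂ) + t) * D ((m : ℂ) + t) t)) * he +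
        (-(((m : ℂ) / 2 + t) * D ((m : ℂ) + t) t)) * hB1 +
        (-(G (m : ℂ) t * D (2 * (m : ℂ) + t) ((m : ℂ) + t))) * hB2
    exact mul_left_cancel₀ hm hmul
  -- the step identity
  have hSTEP : ∀ r s : ℂ, InZT θ r → InZT θ s → r ≠ s → r ≠ -s →
      D (2 * s + r) s = D r s := by
    intro r s hr hs hrs hrns
    obtain ⟨M, hM⟩ := hintsum s r hs hr
    have hM0 : (M : ℂ) ≠ 0 := by
      intro h
      exact hrns (by linear_combination h - hM)
    have h8 := hL8 M (-r) (hmemneg r hr) hM0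
    have hq := hQ (M : ℂ) (-r) ⟨M, rfl⟩ (hmemneg r hr)
    rw [show 2 * (M : ℂ) + -r = 2 * s + r by linear_combination 2 * hM,
      show (M : ℂ) + -r = s by linear_combination hM] at h8
    rw [show (M : ℂ) + -r = s by linear_combination hM, neg_neg,
      show (M : ℂ) + 2 * -r = s - r by linear_combination hM] at hq
    have hGne : G (M : ℂ) (-r) ≠ 0 := by
      intro h
      rw [h, mul_zero, zero_mul] at hq
      rcases mul_eq_zero.1 hq.symm with h3 | h3
      · have hsr : s - r = 0 := by linear_combination -h3
        exact hrs (by linear_combination -hsr)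
      · exact hDne s (-r) hs (hmemneg r hr) h3
    have key : (2 * G (M : ℂ) (-r)) * (D (2 * s + r) s - D r s) = 0 := by
      linear_combination 2 * h8 - hq - (D s (-r)) * hM
    rcases mul_eq_zero.1 key with h | h
    · exact absurd h (mul_ne_zero two_ne_zero hGne)
    · exact sub_eq_zero.1 h
  -- (R0)
  have hR0 : ∀ s t : ℂ, InZT θ s → InZT θ t →
      -2 * t * (D s t * D (-s) t) = -(s + t) * (D s t) ^ 2 - (t - s) * (D (-s) t) ^ 2 := by
    intro s t hs ht
    have hms := hmemneg s hs
    have h := e7 (-s) s t hms hs ht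
    rw [show -s + s = (0 : ℂ) by ring, hG0 t ht] at h
    obtain ⟨m1, hm1⟩ := hintsum s t hs ht
    obtain ⟨m2, hm2⟩ := hintdiff t s ht hs
    have hA := hHD (-s) (s + t) t hms ⟨m1, hm1⟩ (by ring)
    have hB := hHD s (-s + t) t hs ⟨m2, by linear_combination hm2⟩ (by ring)
    linear_combination (D s t * D (-s) t) * h + (D s t) ^ 2 * hA + (D (-s) t) ^ 2 * hB
  -- evenness in the first argument
  have hEVEN : ∀ s t : ℂ, InZT θ s → InZT θ t → t ≠ 0 → D (-s) t = D s t := by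
    have heven0 : ∀ s t : ℂ, InZT θ s → InZT θ t → t ≠ 0 → s ≠ t → s ≠ -t →
        s ≠ -(3 * t) → D (-s) t = D s t := by
      intro s t hs ht ht0 h1 h2 h3
      obtain ⟨n2, hn2⟩ := hint2 t ht
      have hs2 : InZT θ (2 * t + s) := hmemadd _ _ ⟨n2, hn2⟩ hs
      have a := hR0 s t hs ht
      have b := hR0 (2 * t + s) t hs2 ht
      have c1 : D (2 * t + s) t = D s t := hSTEP s t hs ht h1 h2
      have c2 := hSTEP (-(2 * t + s)) t (hmemneg _ hs2) ht
        (by intro h; exact h3 (by linear_combination -h))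
        (by intro h; exact h2 (by linear_combination -h))
      rw [show 2 * t + -(2 * t + s) = -s by ring] at c2
      rw [c1, ← c2] at b
      have hsq : 2 * t * ((D s t - D (-s) t) * (D s t + D (-s) t)) = 0 := by
        linear_combination b - a
      rcases mul_eq_zero.1 hsq with h | h
      · exact absurd h (mul_ne_zero two_ne_zero ht0)
      rcases mul_eq_zero.1 h with h | h
      · exact (sub_eq_zero.1 h).symm
      · exfalso
        have h4 : 4 * t * (D (-s) t) ^ 2 = 0 := by
          linear_combination a - ((s + t) * D s t - (s + 3 * t) * D (-s) t) * h
        rcases mul_eq_zero.1 h4 with h5 | h5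
        · rcases mul_eq_zero.1 h5 with h6 | h6
          · norm_num at h6
          · exact ht0 h6
        · exact hDne (-s) t (hmemneg s hs) ht (sq_eq_zero_iff.1 h5)
    intro s t hs ht ht0
    by_cases h1 : s = t
    · rw [h1, (hDneg t ht).2, hDss t ht]
    by_cases h2 : s = -t
    · rw [h2, neg_neg, hDss t ht, (hDneg t ht).2]
    by_cases h3 : s = -(3 * t)
    · have h3t : InZT θ (3 * t) := by
        obtain ⟨n2, hn2⟩ := hint2 t ht
        have := hmemadd (2 * t) t ⟨n2, hn2⟩ ht
        rwa [show 2 * t + t = 3 * t by ring] at this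
      have h30 := heven0 (3 * t) t h3t ht ht0
        (by intro h; exact ht0 (by linear_combination h / 2))
        (by intro h; exact ht0 (by linear_combination h / 4))
        (by intro h; exact ht0 (by linear_combination h / 6))
      rw [h3, neg_neg]
      exact h30.symm
    · exact heven0 s t hs ht ht0 h1 h2 h3
  -- D(3s,s) = 1 and D(s,3s) = 1
  have hDodd1 : ∀ s : ℂ, InZT θ s → s ≠ 0 → D (3 * s) s = 1 ∧ D s (3 * s) = 1 := by
    intro s hs hs0
    obtain ⟨n2, hn2⟩ := hint2 s hs
    have h3s : InZT θ (3 * s) := by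
      have := hmemadd (2 * s) s ⟨n2, hn2⟩ hs
      rwa [show 2 * s + s = 3 * s by ring] at this
    have h3s0 : (3 : ℂ) * s ≠ 0 := mul_ne_zero (by norm_num) hs0
    have he := e1 n2 s hs
    have hfac : (G ((n2 : ℤ) : ℂ) s - H s ((n2 : ℤ) : ℂ)) * (1 + 2 * ε * s) = 0 := by
      linear_combination he +
        (H s ((n2 : ℤ) : ℂ) * ε + (1 + 2 * ε * (((n2 : ℤ) : ℂ) + s)) / 2) * hn2
    have hGH : G ((n2 : ℤ) : ℂ) s = H s ((n2 : ℤ) : ℂ) := by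
      rcases mul_eq_zero.1 hfac with h | h
      · exact sub_eq_zero.1 h
      · exact absurd h (hne2 s hs)
    have hHD3 := hHD s ((n2 : ℤ) : ℂ) (3 * s) hs ⟨n2, rfl⟩ (by linear_combination hn2)
    rw [← hGH] at hHD3
    have hq := hQ ((n2 : ℤ) : ℂ) s ⟨n2, rfl⟩ hs
    rw [show ((n2 : ℤ) : ℂ) + s = 3 * s by linear_combination hn2,
      show ((n2 : ℤ) : ℂ) + 2 * s = 4 * s by linear_combination hn2,
      hEVEN s (3 * s) hs h3s h3s0] at hq
    have key : 4 * s * (D (3 * s) s - 1) = 0 := by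
      linear_combination hq - 2 * hHD3 + 2 * hn2
    have hA : D (3 * s) s = 1 := by
      rcases mul_eq_zero.1 key with h | h
      · rcases mul_eq_zero.1 h with h5 | h5
        · norm_num at h5
        · exact absurd h5 hs0
      · exact sub_eq_zero.1 h
    refine ⟨hA, ?_⟩
    have he2 := e2 (3 * s) s h3s hs
    rw [hA] at he2
    have key2 : (D s (3 * s) - 1) * (1 + 2 * ε * (3 * s)) = 0 := by linear_combination he2
    rcases mul_eq_zero.1 key2 with h | h
    · exact sub_eq_zero.1 h
    · exact absurd h (hne2 (3 * s) h3s)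
  -- membership of odd multiples
  have hmemodd : ∀ (k : ℤ) (s : ℂ), InZT θ s → InZT θ ((2 * (k : ℂ) + 1) * s) := by
    intro k s hs
    obtain ⟨n2, hn2⟩ := hint2 s hs
    have := hmemadd ((k * n2 : ℤ) : ℂ) s ⟨k * n2, rfl⟩ hs
    rwa [show ((k * n2 : ℤ) : ℂ) + s = (2 * (k : ℂ) + 1) * s by
      push_cast; linear_combination (k : ℂ) * hn2] at this
  -- step for all x (when s ≠ 0)
  have hstepA : ∀ s : ℂ, InZT θ s → s ≠ 0 → ∀ x : ℂ, InZT θ x →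
      D (2 * s + x) s = D x s := by
    intro s hs hs0 x hx
    by_cases h1 : x = s
    · rw [h1, show 2 * s + s = 3 * s by ring, (hDodd1 s hs hs0).1, hDss s hs]
    by_cases h2 : x = -s
    · rw [h2, show 2 * s + -s = s by ring, hDss s hs, (hDneg s hs).2]
    · exact hSTEP x s hx hs h1 h2
  -- CLAIM 1
  have hCLAIM1 : ∀ r s : ℂ, InZT θ r → InZT θ s → ∀ k : ℤ,
      D (2 * (k : ℂ) * s + r) s = D r s := by
    intro r s hr hs k
    by_cases hs0 : s = 0
    · rw [hs0, show 2 * (k : ℂ) * 0 + r = r by ring]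
    obtain ⟨n2, hn2⟩ := hint2 s hs
    have hmem2k : ∀ j : ℤ, InZT θ (2 * (j : ℂ) * s + r) := by
      intro j
      have := hmemadd ((j * n2 : ℤ) : ℂ) r ⟨j * n2, rfl⟩ hr
      rwa [show ((j * n2 : ℤ) : ℂ) + r = 2 * (j : ℂ) * s + r by
        push_cast; linear_combination (j : ℂ) * hn2] at this
    induction k using Int.induction_on with
    | zero => push_cast; rw [show 2 * (0 : ℂ) * s + r = r by ring]
    | succ i ih =>
        push_cast
        push_cast at ih
        have hm := hmem2k (i : ℤ)
        push_cast at hm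
        have h := hstepA s hs hs0 (2 * (i : ℂ) * s + r) hm
        rw [show 2 * ((i : ℂ) + 1) * s + r = 2 * s + (2 * (i : ℂ) * s + r) by ring, h, ih]
    | pred i ih =>
        push_cast
        push_cast at ih
        have hm := hmem2k (-(i : ℤ) - 1)
        push_cast at hm
        have h := hstepA s hs hs0 (2 * (-(i : ℂ) - 1) * s + r) hm
        rw [show 2 * s + (2 * (-(i : ℂ) - 1) * s + r) = 2 * -(i : ℂ) * s + r by ring] at h
        rw [← h]
        exact ih
  -- odd multiples give 1
  have hDoddA : ∀ s : ℂ, InZT θ s → s ≠ 0 → ∀ k : ℤ, D ((2 * (k : ℂ) + 1) * s) s = 1 := by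
    intro s hs hs0 k
    have h := hCLAIM1 s s hs hs k
    rw [show 2 * (k : ℂ) * s + s = (2 * (k : ℂ) + 1) * s by ring, hDss s hs] at h
    exact h
  have hDoddB : ∀ s : ℂ, InZT θ s → s ≠ 0 → ∀ k : ℤ, D s ((2 * (k : ℂ) + 1) * s) = 1 := by
    intro s hs hs0 k
    have hodd := hmemodd k s hs
    have he2 := e2 ((2 * (k : ℂ) + 1) * s) s hodd hs
    rw [hDoddA s hs hs0 k] at he2
    have key : (D s ((2 * (k : ℂ) + 1) * s) - 1) * (1 + 2 * ε * ((2 * (k : ℂ) + 1) * s)) = 0 := by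
      linear_combination he2
    rcases mul_eq_zero.1 key with h | h
    · exact sub_eq_zero.1 h
    · exact absurd h (hne2 _ hodd)
  -- δ' conversion
  have hδ : ∀ x u : ℂ, InZT θ x → InZT θ u → x ≠ 0 →
      (1 - 2 * ε * u) * D x (-u) = (1 + 2 * ε * u) * D x u - 4 * ε * u := by
    intro x u hx hu hx0
    have h1 := e2 x (-u) hx (hmemneg u hu)
    have h2 := e2 x u hx hu
    rw [hEVEN u x hu hx hx0] at h1
    linear_combination h1 - h2
  -- the fundamental relation (F)
  have hF : ∀ t u : ℂ, InZT θ t → InZT θ u → t ≠ 0 → u ≠ 0 → u + t ≠ 0 →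
      (1 + 2 * ε * t) * D t u
        = (2 * ε * t - 2 * ε * u + (1 + 2 * ε * u) * D t u) * D (u - 2 * t) u := by
    intro t u ht hu ht0 hu0 hut
    obtain ⟨muv, hmut⟩ := hintdiff u t hu ht
    obtain ⟨n2, hn2⟩ := hint2 t ht
    have hmt := hmemneg t ht
    have hu2t : InZT θ (u - 2 * t) := by
      have := hmemadd ((-n2 : ℤ) : ℂ) u ⟨-n2, rfl⟩ hu
      rwa [show ((-n2 : ℤ) : ℂ) + u = u - 2 * t by push_cast; linear_combination -hn2] at this
    have he := e4 muv n2 (-t) hmt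
    rw [show ((muv : ℤ) : ℂ) + -t = u - 2 * t by linear_combination hmut,
      show ((n2 : ℤ) : ℂ) + -t = t by linear_combination hn2,
      show ((muv : ℤ) : ℂ) + ((n2 : ℤ) : ℂ) = u + t by linear_combination hmut + hn2] at he
    have hHD1 : H (-t) ((n2 : ℤ) : ℂ) = -((n2 : ℤ) : ℂ) := by
      have h := hHD (-t) ((n2 : ℤ) : ℂ) t hmt ⟨n2, rfl⟩ (by linear_combination hn2)
      rwa [(hDneg t ht).2, mul_one] at h
    rw [hHD1] at he
    have hB := hHD (u - 2 * t) ((n2 : ℤ) : ℂ) u hu2t ⟨n2, rfl⟩ (by linear_combination hn2)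
    have hC := hHD (-t) (u + t) u hmt
      ⟨muv + n2, by push_cast; linear_combination hmut + hn2⟩ (by ring)
    have hq := hQ ((muv : ℤ) : ℂ) t ⟨muv, rfl⟩ ht
    rw [show ((muv : ℤ) : ℂ) + t = u by linear_combination hmut] at hq
    have hev : D (-t) u = D t u := hEVEN t u ht hu hu0
    rw [hev] at hq hC
    -- eliminate casts
    rw [hmut] at he hq
    rw [hn2] at he hB
    -- he : ((u-t)/2 - -t) * H (u-2t) (2t) = -(2t) * G (u-t) t + 2t * H (-t) (u+t)
    -- hB : H (u-2t) (2t) * D (u-2t) u = -(2t)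
    -- hC : H (-t) (u+t) * D t u = -(u+t)
    -- hq : 2 * G (u-t) t * D t u = -((u-t) + 2t) * D u t
    have he2q := e2 u t hu ht
    have hT2 : (t * (u + t)) * D t u
        = (t * (u + t)) * ((2 - D u t) * D (u - 2 * t) u) := by
      linear_combination (-(D t u * D (u - 2 * t) u)) * he +
        ((u + t) / 2 * D t u) * hB + (t * D (u - 2 * t) u) * hq +
        (-(2 * t * D (u - 2 * t) u)) * hC
    have hW := mul_left_cancel₀ (mul_ne_zero ht0 hut) hT2
    linear_combination (1 + 2 * ε * t) * hW - (D (u - 2 * t) u) * he2q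
  -- core rigidity for ε ≠ 0
  have hcore : ε ≠ 0 → ∀ t u : ℂ, InZT θ t → InZT θ u → t ≠ 0 → u ≠ 0 →
      t ≠ u → t ≠ -u → u + 2 * t ≠ 0 → D t u = 1 := by
    intro hε0 t u ht hu ht0 hu0 htu htnu h2t
    obtain ⟨n2, hn2⟩ := hint2 t ht
    have hmu := hmemneg u hu
    have hF1 := hF t u ht hu ht0 hu0
      (by intro h; exact htnu (by linear_combination h))
    have hF2 := hF t (-u) ht hmu ht0 (neg_ne_zero.2 hu0)
      (by intro h; exact htu (by linear_combination h))
    have hXe := hδ t u ht hu ht0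
    have hmemu2t : InZT θ ((n2 : ℂ) + u) := hmemadd _ _ ⟨n2, rfl⟩ hu
    have hb : InZT θ (-u - 2 * t) := by
      have := hmemneg _ hmemu2t
      rwa [show -(((n2 : ℤ) : ℂ) + u) = -u - 2 * t by linear_combination -hn2] at this
    have hx2 : (-u - 2 * t) ≠ 0 := by
      intro h; exact h2t (by linear_combination -h)
    have hYe := hδ (-u - 2 * t) u hb hu hx2
    -- convert D (-u-2t) u to D (u-2t) u
    have hmemA : InZT θ (u + 2 * t) := by
      have := hmemadd ((n2 : ℤ) : ℂ) u ⟨n2, rfl⟩ hu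
      rwa [show ((n2 : ℤ) : ℂ) + u = u + 2 * t by linear_combination hn2] at this
    have hmemB : InZT θ (2 * t - u) := by
      have := hmemadd ((n2 : ℤ) : ℂ) (-u) ⟨n2, rfl⟩ hmu
      rwa [show ((n2 : ℤ) : ℂ) + -u = 2 * t - u by linear_combination hn2] at this
    have hc1 : D (-(u + 2 * t)) u = D (u + 2 * t) u := hEVEN (u + 2 * t) u hmemA hu hu0
    have hc2 := hCLAIM1 (2 * t - u) u hmemB hu 1
    have hc3 : D (-(2 * t - u)) u = D (2 * t - u) u := hEVEN (2 * t - u) u hmemB hu hu0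
    have hconv : D (-u - 2 * t) u = D (u - 2 * t) u := by
      rw [show -u - 2 * t = -(u + 2 * t) by ring, hc1,
        show u + 2 * t = 2 * ((1 : ℤ) : ℂ) * u + (2 * t - u) by push_cast; ring, hc2,
        show (u - 2 * t : ℂ) = -(2 * t - u) by ring, hc3]
    rw [hconv] at hYe
    -- κ-forms
    have hk : (1 + 2 * ε * u) * (D t u - 1) = (1 - 2 * ε * u) * (D t (-u) - 1) := by
      linear_combination -hXe
    have hl : (1 + 2 * ε * u) * (D (u - 2 * t) u - 1)
        = (1 - 2 * ε * u) * (D (-u - 2 * t) (-u) - 1) := by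
      linear_combination -hYe
    have hE1 : 2 * ε * (t - u) * ((1 + 2 * ε * u) * (D t u - 1))
        = ((1 + 2 * ε * u) * (D (u - 2 * t) u - 1)) *
          ((1 + 2 * ε * t) + (1 + 2 * ε * u) * (D t u - 1)) := by
      linear_combination (1 + 2 * ε * u) * hF1
    have hE2' : 2 * ε * (t + u) * ((1 - 2 * ε * u) * (D t (-u) - 1))
        = ((1 - 2 * ε * u) * (D (-u - 2 * t) (-u) - 1)) *
          ((1 + 2 * ε * t) + (1 - 2 * ε * u) * (D t (-u) - 1)) := by
      linear_combination (1 - 2 * ε * u) * hF2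
    have hE2 : 2 * ε * (t + u) * ((1 + 2 * ε * u) * (D t u - 1))
        = ((1 + 2 * ε * u) * (D (u - 2 * t) u - 1)) *
          ((1 + 2 * ε * t) + (1 + 2 * ε * u) * (D t u - 1)) := by
      rw [hk, hl]; exact hE2'
    have hkey : (4 * ε * u) * ((1 + 2 * ε * u) * (D t u - 1)) = 0 := by
      linear_combination hE2 - hE1
    rcases mul_eq_zero.1 hkey with h | h
    · exfalso
      rcases mul_eq_zero.1 h with h5 | h5
      · rcases mul_eq_zero.1 h5 with h6 | h6
        · norm_num at h6
        · exact hε0 h6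
      · exact hu0 h5
    · rcases mul_eq_zero.1 h with h5 | h5
      · exact absurd h5 (hne2 u hu)
      · exact sub_eq_zero.1 h5
  -- main rigidity : ε ≠ 0 → D t u = 1 for u ≠ 0
  have hmain : ε ≠ 0 → ∀ t u : ℂ, InZT θ t → InZT θ u → u ≠ 0 → D t u = 1 := by
    intro hε0 t u ht hu hu0
    by_cases ht0 : t = 0
    · subst ht0
      obtain ⟨k0, hk0⟩ := id ht
      obtain ⟨ku, hku⟩ := id hu
      have hmemint : ∀ x : ℂ, (∃ n : ℤ, (n : ℂ) = x) → InZT θ x := by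
        rintro x ⟨n, rfl⟩
        exact ⟨n + k0, by push_cast; linear_combination hk0⟩
      have hMu : ((ku - k0 : ℤ) : ℂ) = u := by
        push_cast; linear_combination -hku + hk0
      have hMune : ((ku - k0 : ℤ) : ℂ) ≠ 0 := by rw [hMu]; exact hu0
      have hmu := hmemneg u hu
      have hmem2u : InZT θ (2 * u) := hmemint _ ⟨2 * (ku - k0), by push_cast; linear_combination -2*hku + 2*hk0⟩
      have hmem2un : InZT θ (-(2 * u)) := hmemneg _ hmem2u
      have h2u0 : (2 : ℂ) * u ≠ 0 := mul_ne_zero two_ne_zero hu0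
      have hval1 : D (2 * u) u = 1 := by
        refine hcore hε0 (2 * u) u hmem2u hu h2u0 hu0 ?_ ?_ ?_
        · intro h; exact hu0 (by linear_combination h)
        · intro h; exact hu0 (by linear_combination h / 3)
        · intro h; exact hu0 (by linear_combination h / 5)
      have hval2 : D (-(2 * u)) u = 1 := by
        rw [hEVEN (2 * u) u hmem2u hu hu0]; exact hval1
      have hval3 : D (-(2 * u)) (-u) = 1 := by
        refine hcore hε0 (-(2 * u)) (-u) hmem2un hmu (neg_ne_zero.2 h2u0) (neg_ne_zero.2 hu0) ?_ ?_ ?_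
        · intro h; exact hu0 (by linear_combination -h)
        · intro h; exact hu0 (by linear_combination -h / 3)
        · intro h; exact hu0 (by linear_combination -h / 5)
      have hval4 : D (2 * u) (-u) = 1 := by
        refine hcore hε0 (2 * u) (-u) hmem2u hmu h2u0 (neg_ne_zero.2 hu0) ?_ ?_ ?_
        · intro h; exact hu0 (by linear_combination h / 3)
        · intro h; exact hu0 (by linear_combination h)
        · intro h; exact hu0 (by linear_combination h / 3)
      -- first e6 instance
      have h6a := e6 (ku - k0) (-(2 * u)) 0 hmem2un ht
      rw [show ((ku - k0 : ℤ) : ℂ) + 0 = u by linear_combination hMu,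
        show ((ku - k0 : ℤ) : ℂ) + -(2 * u) = -u by linear_combination hMu,
        hval2] at h6a
      have hhd0 : H 0 ((ku - k0 : ℤ) : ℂ) * D 0 u = -((ku - k0 : ℤ) : ℂ) :=
        hHD 0 ((ku - k0 : ℤ) : ℂ) u ht ⟨ku - k0, rfl⟩ (by linear_combination hMu)
      have hhd1 : H (-(2 * u)) ((ku - k0 : ℤ) : ℂ) * D (-(2 * u)) (-u) = -((ku - k0 : ℤ) : ℂ) :=
        hHD (-(2 * u)) ((ku - k0 : ℤ) : ℂ) (-u) hmem2un ⟨ku - k0, rfl⟩ (by linear_combination hMu)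
      rw [hval3, mul_one] at hhd1
      rw [hhd1] at h6a
      have heq1 : (2 * D 0 u - 1 - D 0 u * D 0 (-u)) * ((ku - k0 : ℤ) : ℂ) = 0 := by
        linear_combination (-(D 0 u)) * h6a - hhd0
      -- second e6 instance
      have h6b := e6 (-(ku - k0)) (2 * u) 0 hmem2u ht
      push_cast at h6b
      rw [show -((ku : ℂ) - (k0 : ℂ)) + 0 = -u by push_cast at hMu ⊢; linear_combination -hMu,
        show -((ku : ℂ) - (k0 : ℂ)) + 2 * u = u by push_cast at hMu ⊢; linear_combination -hMu,
        hval4] at h6b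
      have hhd2 : H 0 (-(((ku - k0 : ℤ) : ℂ))) * D 0 (-u) = -(-(((ku - k0 : ℤ) : ℂ))) :=
        hHD 0 (-(((ku - k0 : ℤ) : ℂ))) (-u) ht ⟨-(ku - k0), by push_cast; ring⟩
          (by linear_combination -hMu)
      have hhd3 : H (2 * u) (-(((ku - k0 : ℤ) : ℂ))) * D (2 * u) u = -(-(((ku - k0 : ℤ) : ℂ))) :=
        hHD (2 * u) (-(((ku - k0 : ℤ) : ℂ))) u hmem2u ⟨-(ku - k0), by push_cast; ring⟩
          (by linear_combination -hMu)
      rw [hval1, mul_one] at hhd3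
      push_cast at hhd0 hhd1 hhd2 hhd3 heq1
      rw [hhd3] at h6b
      have heq2 : (2 * D 0 (-u) - 1 - D 0 (-u) * D 0 u) * ((ku : ℂ) - (k0 : ℂ)) = 0 := by
        linear_combination (D 0 (-u)) * h6b + hhd2
      have hMune' : ((ku : ℂ) - (k0 : ℂ)) ≠ 0 := by
        intro h; apply hMune; push_cast; linear_combination h
      have heq1' : 2 * D 0 u - 1 - D 0 u * D 0 (-u) = 0 := by
        rcases mul_eq_zero.1 heq1 with h | h
        · exact h
        · exact absurd h hMune'
      have heq2' : 2 * D 0 (-u) - 1 - D 0 (-u) * D 0 u = 0 := by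
        rcases mul_eq_zero.1 heq2 with h | h
        · exact h
        · exact absurd h hMune'
      have hab : D 0 u = D 0 (-u) := by linear_combination (heq1' - heq2') / 2
      have hsq : (D 0 u - 1) ^ 2 = 0 := by
        linear_combination -heq1' + (D 0 u) * hab
      exact sub_eq_zero.1 (sq_eq_zero_iff.1 hsq)
    · by_cases h1 : t = u
      · rw [h1]; exact hDss u hu
      by_cases h2 : t = -u
      · rw [h2]; exact (hDneg u hu).2
      by_cases h3 : u + 2 * t = 0
      · have hev := hEVEN t u ht hu hu0
        rw [← hev]
        refine hcore hε0 (-t) u (hmemneg t ht) hu (neg_ne_zero.2 ht0) hu0 ?_ ?_ ?_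
        · intro h; exact ht0 (by linear_combination h + h3)
        · intro h; exact h1 (by linear_combination -h)
        · intro h; exact ht0 (by linear_combination (h3 - h) / 4)
      · exact hcore hε0 t u ht hu ht0 hu0 h1 h2 h3
  -- full rigidity
  have hD1 : ε ≠ 0 → ∀ x y : ℂ, InZT θ x → InZT θ y → D x y = 1 := by
    intro hε0 x y hx hy
    by_cases hy0 : y = 0
    · subst hy0
      by_cases hx0 : x = 0
      · subst hx0; exact hDss 0 hx
      · have h := e2 x 0 hx hy
        rw [hmain hε0 0 x hy hx hx0] at h
        linear_combination h
    · exact hmain hε0 x y hx hy hy0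
  -- CLAIM 2
  have hCLAIM2 : ∀ r s : ℂ, InZT θ r → InZT θ s → ∀ k : ℤ,
      D (-s) (-2 * (k : ℂ) * s - r) = D (-s) (-r) := by
    intro r s hr hs k
    have hmr := hmemneg r hr
    have hms := hmemneg s hs
    have hmem1 : InZT θ (-2 * (k : ℂ) * s - r) := by
      obtain ⟨n2, hn2⟩ := hint2 s hs
      have h' := hmemadd ((k * n2 : ℤ) : ℂ) r ⟨k * n2, rfl⟩ hr
      rw [show ((k * n2 : ℤ) : ℂ) + r = 2 * (k : ℂ) * s + r by
        push_cast; linear_combination (k : ℂ) * hn2] at h'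
      have := hmemneg _ h'
      rwa [show -(2 * (k : ℂ) * s + r) = -2 * (k : ℂ) * s - r by ring] at this
    by_cases hε0 : ε = 0
    · have hsum2 : ∀ a b : ℂ, InZT θ a → InZT θ b → D a b + D b a = 2 := by
        intro a b ha hb
        have h := e2 a b ha hb
        rw [hε0] at h
        linear_combination h
      have hc1 := hCLAIM1 (-r) (-s) hmr hms k
      rw [show 2 * (k : ℂ) * -s + -r = -2 * (k : ℂ) * s - r by ring] at hc1
      have ha := hsum2 (-s) (-2 * (k : ℂ) * s - r) hms hmem1
      have hb := hsum2 (-s) (-r) hms hmr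
      linear_combination ha - hb - hc1
    · rw [hD1 hε0 (-s) _ hms hmem1, hD1 hε0 (-s) (-r) hms hmr]
  -- final assembly
  refine ⟨fun r s hr hs k => ⟨hCLAIM1 r s hr hs k, hCLAIM2 r s hr hs k⟩, fun r hr k => ?_⟩
  by_cases hr0 : r = 0
  · subst hr0
    constructor <;> rw [mul_zero] <;> exact hDss 0 hr
  · exact ⟨hDoddA r hr hr0 k, hDoddB r hr hr0 k⟩
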